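/- arXiv:math/9908159 — 3 statements merged into one kernel-verified Lean document; each statement's English description precedes it below -/
import Mathlib

section
/- Let λ = ℵ_ω and κ = (2^{ℵ₀})⁺, and assume κ < λ and 2^λ = λ^{ℵ₀}. Then there exists a stationary subset S of [λ]^{<κ} such that every unbounded subset of S is stationary. -/
open Cardinal Set

noncomputable section

/-- A finitary function on the ordinals: an arity `n` together with an
`n`-ary function on ordinals. -/
abbrev FinFun := Σ n : ℕ, (Fin n → Ordinal.{0}) → Ordinal.{0}

/-- `[λ]^{<κ}`: the collection of subsets of `λ` (viewed as the set of
ordinals `< λ`) of cardinality `< κ`. -/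
def smallSubsets (lam kap : Cardinal.{0}) : Set (Set Ordinal.{0}) :=
  {a | (∀ x ∈ a, x < lam.ord) ∧ Cardinal.mk ↥a < Cardinal.lift.{1} kap}

/-- The countable family `F` consists of finitary functions *on `λ`*. -/
def FamOn (lam : Cardinal.{0}) (F : Set FinFun) : Prop :=
  ∀ f ∈ F, ∀ x : Fin f.1 → Ordinal.{0}, (∀ i, x i < lam.ord) → f.2 x < lam.ord

/-- The club `C_F` of `[λ]^{<κ}` associated to a family `F` of finitary
functions on `λ`: the members `a` of `[λ]^{<κ}` closed under every function
of `F` and such that `a ∩ κ` is an ordinal (an initial segment of `κ`). -/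
def clubOf (lam kap : Cardinal.{0}) (F : Set FinFun) : Set (Set Ordinal.{0}) :=
  {a | a ∈ smallSubsets lam kap ∧
    (∀ f ∈ F, ∀ x : Fin f.1 → Ordinal.{0}, (∀ i, x i ∈ a) → f.2 x ∈ a) ∧
    ∃ β < kap.ord, a ∩ Set.Iio kap.ord = Set.Iio β}

/-- `C` is a club of `[λ]^{<κ}`. -/
def IsClubPk (lam kap : Cardinal.{0}) (C : Set (Set Ordinal.{0})) : Prop :=
  ∃ F : Set FinFun, F.Countable ∧ FamOn lam F ∧ C = clubOf lam kap F

/-- `S` is a stationary subset of `[λ]^{<κ}`: it meets every club. -/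
def IsStationaryPk (lam kap : Cardinal.{0}) (S : Set (Set Ordinal.{0})) : Prop :=
  ∀ C, IsClubPk lam kap C → (S ∩ C).Nonempty

/-- `S` is an unbounded subset of `[λ]^{<κ}`: every member of `[λ]^{<κ}`
is contained in some member of `S`. -/
def IsUnbounded (lam kap : Cardinal.{0}) (S : Set (Set Ordinal.{0})) : Prop :=
  ∀ b ∈ smallSubsets lam kap, ∃ a ∈ S, b ⊆ a

/-- The club filter `E_{λ,κ}`: the filter generated by the clubs of
`[λ]^{<κ}`. -/
def clubFilter (lam kap : Cardinal.{0}) : Filter (Set Ordinal.{0}) :=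
  Filter.generate {C | IsClubPk lam kap C}

namespace StatAux

def Norm (lam : Cardinal.{0}) : Type 1 :=
  {f : FinFun // (∀ x : Fin f.1 → Ordinal.{0}, (∀ i, x i < lam.ord) → f.2 x < lam.ord) ∧
    ∀ x : Fin f.1 → Ordinal.{0}, (¬ ∀ i, x i < lam.ord) → f.2 x = 0}

abbrev Seq (lam : Cardinal.{0}) : Type 1 := ℕ → ↥(Set.Iio lam.ord)

lemma norm_nonempty {lam : Cardinal.{0}} (h : (0 : Ordinal) < lam.ord) :
    Nonempty (Norm lam) :=
  ⟨⟨⟨0, fun _ => 0⟩, fun _ _ => h, fun _ _ => rfl⟩⟩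

lemma mk_Iio_ord (lam : Cardinal.{0}) : #(↥(Set.Iio lam.ord)) = Cardinal.lift.{1} lam := by
  rw [Ordinal.mk_Iio_ordinal, Cardinal.card_ord]

lemma exists_psi (lam : Cardinal.{0}) (hlam : ℵ₀ ≤ lam) (harith : 2 ^ lam = lam ^ ℵ₀) :
    ∃ ψ : Seq lam → Norm lam, Function.Surjective ψ := by
  classical
  have h0 : (0 : Ordinal) < lam.ord := by
    rw [Cardinal.lt_ord, Ordinal.card_zero]
    exact lt_of_lt_of_le Cardinal.aleph0_pos hlam
  have hne : Nonempty (Norm lam) := norm_nonempty h0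
  set X := ↥(Set.Iio lam.ord) with hX
  have hmkX : #X = Cardinal.lift.{1} lam := mk_Iio_ord lam
  have hlne : Cardinal.lift.{1} lam ≠ 0 := by
    rw [ne_eq, Cardinal.lift_eq_zero]
    exact ((Cardinal.aleph0_pos).trans_le hlam).ne'
  let J : Norm lam → Σ n : ℕ, ((Fin n → X) → X) := fun f =>
    ⟨f.1.1, fun x => ⟨f.1.2 (fun i => (x i).1), f.2.1 _ (fun i => (x i).2)⟩⟩
  let unJ : (Σ n : ℕ, ((Fin n → X) → X)) → FinFun := fun g =>
    ⟨g.1, fun x => if h : ∀ i, x i < lam.ord then (g.2 (fun i => ⟨x i, h i⟩)).1 else 0⟩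
  have key : ∀ f : Norm lam, unJ (J f) = f.1 := by
    rintro ⟨⟨n, F⟩, hF1, hF2⟩
    refine (congrArg (Sigma.mk n) (funext fun x => ?_)).trans rfl
    by_cases hx : ∀ i, x i < lam.ord
    · simp only [unJ, J, dif_pos hx]
    · simp only [unJ, J, dif_neg hx]
      exact (hF2 x hx).symm
  have hJ : Function.Injective J := fun f g h => Subtype.ext (by rw [← key f, ← key g, h])
  have hcard : #(Norm lam) ≤ #(Seq lam) := by
    have hSeq : #(Seq lam) = Cardinal.lift.{1} (2 ^ lam) := by
      rw [show Seq lam = (ℕ → X) from rfl, Cardinal.mk_arrow, hmkX]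
      simp [Cardinal.lift_uzero, harith, Cardinal.lift_power]
    have hne0 : lam ≠ 0 := ((Cardinal.aleph0_pos).trans_le hlam).ne'
    have hbound : ∀ n : ℕ, #((Fin n → X) → X) ≤ Cardinal.lift.{1} (2 ^ lam) := by
      intro n
      have heq : #((Fin n → X) → X) = Cardinal.lift.{1} (lam ^ (lam ^ (n : Cardinal.{0}))) := by
        rw [Cardinal.mk_arrow, Cardinal.mk_arrow, Cardinal.lift_id, Cardinal.lift_id,
          Cardinal.lift_uzero, hmkX, Cardinal.mk_fin, ← Cardinal.lift_power, ← Cardinal.lift_power]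
      rw [heq, Cardinal.lift_le]
      calc lam ^ (lam ^ (n : Cardinal.{0})) ≤ lam ^ lam :=
            Cardinal.power_le_power_left hne0 (Cardinal.power_nat_le hlam)
        _ = 2 ^ lam := Cardinal.power_self_eq hlam
    calc #(Norm lam) ≤ #(Σ n : ℕ, ((Fin n → X) → X)) := Cardinal.mk_le_of_injective hJ
      _ = Cardinal.sum (fun n : ℕ => #((Fin n → X) → X)) := Cardinal.mk_sigma _
      _ ≤ Cardinal.sum (fun _ : ℕ => Cardinal.lift.{1} (2 ^ lam)) :=
          Cardinal.sum_le_sum _ _ hbound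
      _ = Cardinal.lift.{1} #ℕ * Cardinal.lift.{0} (Cardinal.lift.{1} (2 ^ lam)) :=
          Cardinal.sum_const _ _
      _ ≤ #(Seq lam) := by
          have h2 : (ℵ₀ : Cardinal.{1}) ≤ Cardinal.lift.{1} (2 ^ lam) := by
            rw [← Cardinal.lift_aleph0.{1,0}, Cardinal.lift_le]
            exact hlam.trans (Cardinal.cantor lam).le
          rw [hSeq, Cardinal.lift_uzero, Cardinal.mk_nat, Cardinal.lift_aleph0,
            Cardinal.mul_eq_max (le_refl ℵ₀) h2, max_eq_right h2]
  obtain ⟨e⟩ := Cardinal.le_def _ _ |>.mp hcard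
  refine ⟨fun d => if h : ∃ F, e F = d then h.choose else Classical.choice hne, fun F => ?_⟩
  have h : ∃ F', e F' = e F := ⟨F, rfl⟩
  refine ⟨e F, ?_⟩
  show (dite (∃ F', e F' = e F) (fun h => h.choose) fun _ => Classical.choice hne) = F
  rw [dif_pos h]
  exact e.injective h.choose_spec


def c2 : Cardinal.{0} := 2 ^ ℵ₀

def step (lam kap : Cardinal.{0}) (ψ : Seq lam → Norm lam) (A : Set Ordinal.{0}) :
    Set Ordinal.{0} :=
  (A ∪ {y | ∃ e : Seq lam, (∀ n, ((e n : Ordinal.{0})) ∈ A) ∧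
      ∃ x : Fin (ψ e).1.1 → Ordinal.{0}, (∀ i, x i ∈ A) ∧ (ψ e).1.2 x = y}) ∪
    Set.Iio (sSup ((fun x => x + 1) '' (A ∩ Set.Iio kap.ord)))

def iter (lam kap : Cardinal.{0}) (ψ : Seq lam → Norm lam) (b : Set Ordinal.{0}) :
    Ordinal.{0} → Set Ordinal.{0} :=
  Ordinal.lt_wf.fix fun ξ IH => b ∪ ⋃ η : ↥(Set.Iio ξ), step lam kap ψ (IH η.1 η.2)

variable {lam kap : Cardinal.{0}} {ψ : Seq lam → Norm lam} {b : Set Ordinal.{0}}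

lemma iter_eq (ξ : Ordinal.{0}) : iter lam kap ψ b ξ =
    b ∪ ⋃ η : ↥(Set.Iio ξ), step lam kap ψ (iter lam kap ψ b η.1) :=
  Ordinal.lt_wf.fix_eq _ ξ

lemma self_subset_step (A : Set Ordinal.{0}) : A ⊆ step lam kap ψ A :=
  fun _ hx => Or.inl (Or.inl hx)

lemma b_subset_iter (ξ : Ordinal.{0}) : b ⊆ iter lam kap ψ b ξ := by
  rw [iter_eq]; exact Set.subset_union_left

lemma step_iter_subset {η ξ : Ordinal.{0}} (h : η < ξ) :
    step lam kap ψ (iter lam kap ψ b η) ⊆ iter lam kap ψ b ξ := by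
  rw [iter_eq ξ]
  intro x hx
  exact Or.inr (Set.mem_iUnion.mpr ⟨⟨η, h⟩, hx⟩)

lemma iter_mono {η ξ : Ordinal.{0}} (h : η ≤ ξ) :
    iter lam kap ψ b η ⊆ iter lam kap ψ b ξ := by
  intro x hx
  rw [iter_eq] at hx
  rcases hx with hx | hx
  · exact b_subset_iter ξ hx
  · obtain ⟨⟨γ, hγ⟩, hx⟩ := Set.mem_iUnion.mp hx
    exact step_iter_subset (lt_of_lt_of_le hγ h) hx

lemma two_power_aleph0_le : (ℵ₀ : Cardinal.{0}) ≤ c2 := by rw [c2]; exact (Cardinal.cantor ℵ₀).le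

lemma aleph0_le_lift_c2 : (ℵ₀ : Cardinal.{1}) ≤ Cardinal.lift.{1} c2 := by
  rw [← Cardinal.lift_aleph0.{1,0}, Cardinal.lift_le]
  exact two_power_aleph0_le

lemma add_le_lift_c2 {a b : Cardinal.{1}} (ha : a ≤ Cardinal.lift.{1} c2)
    (hb : b ≤ Cardinal.lift.{1} c2) : a + b ≤ Cardinal.lift.{1} c2 :=
  (add_le_add ha hb).trans_eq (Cardinal.add_eq_self aleph0_le_lift_c2)

lemma mul_le_lift_c2 {a b : Cardinal.{1}} (ha : a ≤ Cardinal.lift.{1} c2)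
    (hb : b ≤ Cardinal.lift.{1} c2) : a * b ≤ Cardinal.lift.{1} c2 :=
  (mul_le_mul' ha hb).trans_eq (Cardinal.mul_eq_self aleph0_le_lift_c2)

lemma c2_pow_aleph0 : (c2 ^ (ℵ₀ : Cardinal.{0}) : Cardinal.{0}) = c2 := by
  rw [c2, ← Cardinal.power_mul, Cardinal.aleph0_mul_aleph0]

lemma small_sSup_lt_ord {κ : Cardinal.{0}} (hreg : κ.IsRegular) {s : Set Ordinal.{0}}
    (hb : ∀ x ∈ s, x < κ.ord) (hs : #↥s < Cardinal.lift.{1} κ) : sSup s < κ.ord := by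
  rcases Set.eq_empty_or_nonempty s with h | h
  · rw [h, csSup_empty, Ordinal.bot_eq_zero]
    exact hreg.ord_pos
  · obtain ⟨μ, hμlt, hμe⟩ := Cardinal.lt_lift_iff.mp hs
    have hmk : #(ULift.{1,0} μ.out) = #(↥s) := by
      rw [Cardinal.mk_uLift, Cardinal.mk_out, hμe]
    obtain ⟨φ⟩ := Cardinal.eq.mp hmk
    set f : μ.out → Ordinal.{0} := fun i => (φ ⟨i⟩).1 with hf
    have hrange : s = Set.range f := by
      ext y
      constructor
      · intro hy
        refine ⟨(φ.symm ⟨y, hy⟩).down, ?_⟩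
        show (φ ⟨(φ.symm ⟨y, hy⟩).down⟩).1 = y
        rw [show (⟨(φ.symm ⟨y, hy⟩).down⟩ : ULift.{1,0} μ.out) = φ.symm ⟨y, hy⟩ from rfl,
          Equiv.apply_symm_apply]
      · rintro ⟨i, rfl⟩
        exact (φ ⟨i⟩).2
    have hsup : iSup f < κ.ord := by
      refine Cardinal.iSup_lt_ord_of_isRegular hreg ?_ ?_
      · rw [Cardinal.mk_out]; exact hμlt
      · intro i; exact hb _ (hrange ▸ Set.mem_range_self i)
    rw [hrange]
    exact hsup

lemma step_bounds (hkap : kap = Order.succ c2) (hkl : kap < lam) {A : Set Ordinal.{0}}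
    (hA : ∀ x ∈ A, x < lam.ord) (hAc : #↥A ≤ Cardinal.lift.{1} c2) :
    (∀ x ∈ step lam kap ψ A, x < lam.ord) ∧
      #↥(step lam kap ψ A) ≤ Cardinal.lift.{1} c2 := by
  have hreg : kap.IsRegular := hkap ▸ Cardinal.isRegular_succ two_power_aleph0_le
  have hck : c2 < kap := hkap ▸ Order.lt_succ _
  have hsup : sSup ((fun x => x + 1) '' (A ∩ Set.Iio kap.ord)) < kap.ord := by
    refine small_sSup_lt_ord hreg ?_ ?_
    · rintro y ⟨x, ⟨-, hxk⟩, rfl⟩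
      show x + 1 < kap.ord
      rw [Ordinal.add_one_eq_succ]
      exact (Cardinal.isSuccLimit_ord hreg.aleph0_le).succ_lt hxk
    · exact lt_of_le_of_lt (Cardinal.mk_image_le.trans
        ((Cardinal.mk_le_mk_of_subset Set.inter_subset_left).trans hAc))
        (Cardinal.lift_lt.2 hck)
  constructor
  · rintro x ((hx | hx) | hx)
    · exact hA x hx
    · obtain ⟨e, he, x', hx', rfl⟩ := hx
      exact (ψ e).2.1 x' fun i => hA _ (hx' i)
    · exact (hx.trans hsup).trans (Cardinal.ord_lt_ord.2 hkl)
  · -- cardinality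
    have htuple : ∀ m : ℕ, #({x : Fin m → Ordinal.{0} // ∀ i, x i ∈ A}) ≤
        Cardinal.lift.{1} c2 := by
      intro m
      have hinj : Function.Injective
          (fun (p : {x : Fin m → Ordinal.{0} // ∀ i, x i ∈ A}) (i : Fin m) =>
            (⟨p.1 i, p.2 i⟩ : ↥A)) := by
        intro p q h
        exact Subtype.ext (funext fun i => congrArg Subtype.val (congrFun h i))
      refine (Cardinal.mk_le_of_injective hinj).trans ?_
      rw [Cardinal.mk_arrow, Cardinal.lift_uzero, Cardinal.mk_fin]
      calc #↥A ^ Cardinal.lift.{1} ((m : Cardinal.{0}))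
          ≤ Cardinal.lift.{1} c2 ^ Cardinal.lift.{1} ((m : Cardinal.{0})) :=
            Cardinal.power_le_power_right hAc
        _ = Cardinal.lift.{1} (c2 ^ (m : Cardinal.{0})) := by rw [Cardinal.lift_power]
        _ ≤ Cardinal.lift.{1} c2 :=
            Cardinal.lift_le.2 (Cardinal.power_nat_le two_power_aleph0_le)
    have hseqs : #({e : Seq lam // ∀ n, ((e n : Ordinal.{0})) ∈ A}) ≤
        Cardinal.lift.{1} c2 := by
      have hinj : Function.Injective
          (fun (e : {e : Seq lam // ∀ n, ((e n : Ordinal.{0})) ∈ A}) (n : ℕ) =>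
            (⟨(e.1 n).1, e.2 n⟩ : ↥A)) := by
        intro p q h
        refine Subtype.ext (funext fun n => Subtype.ext ?_)
        simpa using congrFun h n
      refine (Cardinal.mk_le_of_injective hinj).trans ?_
      rw [Cardinal.mk_arrow, Cardinal.lift_uzero, Cardinal.mk_nat, Cardinal.lift_aleph0]
      calc #↥A ^ (ℵ₀ : Cardinal.{1})
          ≤ Cardinal.lift.{1} c2 ^ (ℵ₀ : Cardinal.{1}) :=
            Cardinal.power_le_power_right hAc
        _ = Cardinal.lift.{1} (c2 ^ (ℵ₀ : Cardinal.{0})) := by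
            rw [Cardinal.lift_power, Cardinal.lift_aleph0]
        _ = Cardinal.lift.{1} c2 := by rw [c2_pow_aleph0]
    have hV : #(↥{y | ∃ e : Seq lam, (∀ n, ((e n : Ordinal.{0})) ∈ A) ∧
        ∃ x : Fin (ψ e).1.1 → Ordinal.{0}, (∀ i, x i ∈ A) ∧ (ψ e).1.2 x = y}) ≤
        Cardinal.lift.{1} c2 := by
      set V := {y | ∃ e : Seq lam, (∀ n, ((e n : Ordinal.{0})) ∈ A) ∧
        ∃ x : Fin (ψ e).1.1 → Ordinal.{0}, (∀ i, x i ∈ A) ∧ (ψ e).1.2 x = y} with hVdef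
      let T := Σ e : {e : Seq lam // ∀ n, ((e n : Ordinal.{0})) ∈ A},
        {x : Fin (ψ e.1).1.1 → Ordinal.{0} // ∀ i, x i ∈ A}
      have hsurj : Function.Surjective (fun p : T =>
          (⟨(ψ p.1.1).1.2 p.2.1, ⟨p.1.1, p.1.2, p.2.1, p.2.2, rfl⟩⟩ : ↥V)) := by
        rintro ⟨y, e, he, x, hx, rfl⟩
        exact ⟨⟨⟨e, he⟩, ⟨x, hx⟩⟩, rfl⟩
      refine (Cardinal.mk_le_of_surjective hsurj).trans ?_
      calc #T = Cardinal.sum (fun e : {e : Seq lam // ∀ n, ((e n : Ordinal.{0})) ∈ A} =>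
            #({x : Fin (ψ e.1).1.1 → Ordinal.{0} // ∀ i, x i ∈ A})) := Cardinal.mk_sigma _
        _ ≤ Cardinal.sum (fun _ : {e : Seq lam // ∀ n, ((e n : Ordinal.{0})) ∈ A} =>
            Cardinal.lift.{1} c2) := Cardinal.sum_le_sum _ _ fun e => htuple _
        _ = #({e : Seq lam // ∀ n, ((e n : Ordinal.{0})) ∈ A}) * Cardinal.lift.{1} c2 :=
            Cardinal.sum_const' _ _
        _ ≤ Cardinal.lift.{1} c2 := mul_le_lift_c2 hseqs le_rfl
    have hI : #(↥(Set.Iio (sSup ((fun x => x + 1) '' (A ∩ Set.Iio kap.ord))))) ≤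
        Cardinal.lift.{1} c2 := by
      set κo := sSup ((fun x => x + 1) '' (A ∩ Set.Iio kap.ord)) with hκo
      rw [Ordinal.mk_Iio_ordinal, Cardinal.lift_le]
      have h1 : κo.card < kap := Cardinal.lt_ord.mp hsup
      rw [hkap] at h1
      exact Order.lt_succ_iff.mp h1
    refine (Cardinal.mk_union_le _ _).trans (add_le_lift_c2 ((Cardinal.mk_union_le _ _).trans
      (add_le_lift_c2 hAc hV)) hI)

lemma aleph_one_le_c2 : (ℵ₁ : Cardinal.{0}) ≤ c2 := by
  have h1 : (ℵ₁ : Cardinal.{0}) = Order.succ ℵ₀ := by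
    rw [← Cardinal.aleph_zero, ← Cardinal.aleph_succ, Ordinal.succ_zero]
  rw [c2, h1]
  exact Order.succ_le_of_lt (Cardinal.cantor ℵ₀)

lemma iter_bounds (hkap : kap = Order.succ c2) (hkl : kap < lam)
    (hb1 : ∀ x ∈ b, x < lam.ord) (hb2 : #↥b ≤ Cardinal.lift.{1} c2) :
    ∀ ξ : Ordinal.{0}, ξ.card ≤ c2 → (∀ x ∈ iter lam kap ψ b ξ, x < lam.ord) ∧
      #↥(iter lam kap ψ b ξ) ≤ Cardinal.lift.{1} c2 := by
  intro ξ
  induction ξ using Ordinal.induction with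
  | _ ξ IH =>
    intro hξc
    have hIH : ∀ η : ↥(Set.Iio ξ), (∀ x ∈ iter lam kap ψ b η.1, x < lam.ord) ∧
        #↥(iter lam kap ψ b η.1) ≤ Cardinal.lift.{1} c2 :=
      fun η => IH η.1 η.2 ((Ordinal.card_le_card η.2.le).trans hξc)
    constructor
    · rw [iter_eq]
      rintro x (hx | hx)
      · exact hb1 x hx
      · obtain ⟨η, hx⟩ := Set.mem_iUnion.mp hx
        exact (step_bounds hkap hkl (hIH η).1 (hIH η).2).1 x hx
    · rw [iter_eq]
      refine (Cardinal.mk_union_le _ _).trans (add_le_lift_c2 hb2 ?_)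
      refine (Cardinal.mk_iUnion_le _).trans (mul_le_lift_c2 ?_ ?_)
      · rw [Ordinal.mk_Iio_ordinal, Cardinal.lift_le]
        exact hξc
      · exact ciSup_le' fun η => (step_bounds hkap hkl (hIH η).1 (hIH η).2).2

lemma mem_iter_omega1 {x : Ordinal.{0}} (hx : x ∈ iter lam kap ψ b ((aleph 1).ord)) :
    ∃ ξ < (aleph 1).ord, x ∈ iter lam kap ψ b ξ := by
  rw [iter_eq] at hx
  rcases hx with hx | hx
  · exact ⟨0, (Cardinal.isSuccLimit_ord (Cardinal.aleph0_le_aleph 1)).pos, b_subset_iter 0 hx⟩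
  · obtain ⟨⟨η, hη⟩, hx⟩ := Set.mem_iUnion.mp hx
    refine ⟨η + 1, ?_, step_iter_subset (by rw [Ordinal.add_one_eq_succ]; exact Order.lt_succ η) hx⟩
    rw [Ordinal.add_one_eq_succ]
    exact (Cardinal.isSuccLimit_ord (Cardinal.aleph0_le_aleph 1)).succ_lt hη

lemma capture_seq (e : ℕ → Ordinal.{0}) (he : ∀ n, e n ∈ iter lam kap ψ b ((aleph 1).ord)) :
    ∃ ξ < (aleph 1).ord, ∀ n, e n ∈ iter lam kap ψ b ξ := by
  choose g hg1 hg2 using fun n => mem_iter_omega1 (he n)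
  refine ⟨iSup g, ?_, fun n => iter_mono (le_ciSup (Ordinal.bddAbove_range g) n) (hg2 n)⟩
  refine Cardinal.iSup_lt_ord_of_isRegular Cardinal.isRegular_aleph_one ?_ hg1
  rw [Cardinal.mk_nat]
  exact Cardinal.aleph0_lt_aleph_one

lemma capture_fin {m : ℕ} (x : Fin m → Ordinal.{0})
    (hx : ∀ i, x i ∈ iter lam kap ψ b ((aleph 1).ord)) :
    ∃ ξ < (aleph 1).ord, ∀ i, x i ∈ iter lam kap ψ b ξ := by
  choose g hg1 hg2 using fun i => mem_iter_omega1 (hx i)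
  refine ⟨iSup g, ?_, fun i => iter_mono (le_ciSup (Ordinal.bddAbove_range g) i) (hg2 i)⟩
  refine Cardinal.iSup_lt_ord_of_isRegular Cardinal.isRegular_aleph_one ?_ hg1
  rw [Cardinal.mk_fin]
  exact (Cardinal.nat_lt_aleph0 m).trans Cardinal.aleph0_lt_aleph_one

def Sset (lam kap : Cardinal.{0}) (ψ : Seq lam → Norm lam) : Set (Set Ordinal.{0}) :=
  {a | a ∈ smallSubsets lam kap ∧ (∃ β < kap.ord, a ∩ Set.Iio kap.ord = Set.Iio β) ∧
    ∀ e : Seq lam, (∀ n, ((e n : Ordinal.{0})) ∈ a) →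
      ∀ x : Fin (ψ e).1.1 → Ordinal.{0}, (∀ i, x i ∈ a) → (ψ e).1.2 x ∈ a}

lemma iter_mem_Sset (hkap : kap = Order.succ c2) (hkl : kap < lam)
    (hb : b ∈ smallSubsets lam kap) :
    iter lam kap ψ b ((aleph 1).ord) ∈ Sset lam kap ψ ∧
      b ⊆ iter lam kap ψ b ((aleph 1).ord) := by
  obtain ⟨hb1, hb2⟩ := hb
  have hreg : kap.IsRegular := hkap ▸ Cardinal.isRegular_succ two_power_aleph0_le
  have hck : c2 < kap := hkap ▸ Order.lt_succ _
  have hb2' : #↥b ≤ Cardinal.lift.{1} c2 := by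
    rw [hkap, Cardinal.lift_succ, Order.lt_succ_iff] at hb2
    exact hb2
  have hbounds := iter_bounds (ψ := ψ) hkap hkl hb1 hb2' ((aleph 1).ord)
    (by rw [Cardinal.card_ord]; exact aleph_one_le_c2)
  set a := iter lam kap ψ b ((aleph 1).ord) with ha
  have hdc : ∀ y x : Ordinal.{0}, y ≤ x → x ∈ a → x < kap.ord → y ∈ a := by
    intro y x hyx hxa hxk
    obtain ⟨ξ, hξ, hxξ⟩ := mem_iter_omega1 hxa
    have hbdd : BddAbove ((fun z => z + 1) '' (iter lam kap ψ b ξ ∩ Set.Iio kap.ord)) := by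
      refine ⟨kap.ord, ?_⟩
      rintro z ⟨w, ⟨-, hw⟩, rfl⟩
      show w + 1 ≤ kap.ord
      rw [Ordinal.add_one_eq_succ]
      exact ((Cardinal.isSuccLimit_ord hreg.aleph0_le).succ_lt hw).le
    have hmem : y ∈ Set.Iio (sSup ((fun z => z + 1) ''
        (iter lam kap ψ b ξ ∩ Set.Iio kap.ord))) := by
      refine lt_of_lt_of_le ?_ (le_csSup hbdd ⟨x, ⟨hxξ, hxk⟩, rfl⟩)
      show y < x + 1
      rw [Ordinal.add_one_eq_succ, Order.lt_succ_iff]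
      exact hyx
    exact step_iter_subset hξ (Or.inr hmem)
  refine ⟨⟨⟨hbounds.1, hbounds.2.trans_lt (Cardinal.lift_lt.2 hck)⟩, ?_, ?_⟩, b_subset_iter _⟩
  · -- initial segment
    have hbdd : BddAbove ((fun z => z + 1) '' (a ∩ Set.Iio kap.ord)) := by
      refine ⟨kap.ord, ?_⟩
      rintro z ⟨w, ⟨-, hw⟩, rfl⟩
      show w + 1 ≤ kap.ord
      rw [Ordinal.add_one_eq_succ]
      exact ((Cardinal.isSuccLimit_ord hreg.aleph0_le).succ_lt hw).le
    refine ⟨sSup ((fun z => z + 1) '' (a ∩ Set.Iio kap.ord)), ?_, ?_⟩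
    · refine small_sSup_lt_ord hreg ?_ ?_
      · rintro z ⟨w, ⟨-, hw⟩, rfl⟩
        show w + 1 < kap.ord
        rw [Ordinal.add_one_eq_succ]
        exact (Cardinal.isSuccLimit_ord hreg.aleph0_le).succ_lt hw
      · exact lt_of_le_of_lt (Cardinal.mk_image_le.trans
          ((Cardinal.mk_le_mk_of_subset Set.inter_subset_left).trans hbounds.2))
          (Cardinal.lift_lt.2 hck)
    · ext y
      constructor
      · rintro ⟨hya, hyk⟩
        refine lt_of_lt_of_le ?_ (le_csSup hbdd ⟨y, ⟨hya, hyk⟩, rfl⟩)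
        show y < y + 1
        rw [Ordinal.add_one_eq_succ]
        exact Order.lt_succ y
      · intro hy
        rcases Set.eq_empty_or_nonempty (a ∩ Set.Iio kap.ord) with hemp | hne
        · rw [hemp, Set.image_empty, csSup_empty, Ordinal.bot_eq_zero] at hy
          exact absurd hy (not_lt_of_ge (zero_le (a := y)))
        · obtain ⟨z, ⟨x, hx, rfl⟩, hyz⟩ := exists_lt_of_lt_csSup (hne.image (fun z => z + 1)) hy
          have hyx : y ≤ x := by
            have hyz' : y < x + 1 := hyz
            rw [Ordinal.add_one_eq_succ, Order.lt_succ_iff] at hyz'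
            exact hyz'
          exact ⟨hdc y x hyx hx.1 hx.2, lt_of_le_of_lt hyx hx.2⟩
  · -- closure
    intro e he x hx
    obtain ⟨ξ₁, hξ₁, he'⟩ := capture_seq (fun n => (e n : Ordinal.{0})) he
    obtain ⟨ξ₂, hξ₂, hx'⟩ := capture_fin x hx
    have hξ : max ξ₁ ξ₂ < (aleph 1).ord := max_lt hξ₁ hξ₂
    have hmem : (ψ e).1.2 x ∈ step lam kap ψ (iter lam kap ψ b (max ξ₁ ξ₂)) :=
      Or.inl (Or.inr ⟨e, fun n => iter_mono (le_max_left _ _) (he' n), x,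
        fun i => iter_mono (le_max_right _ _) (hx' i), rfl⟩)
    exact step_iter_subset hξ hmem

lemma catch_club {F : Set FinFun} (hψ : Function.Surjective ψ) (hcnt : F.Countable)
    (hFam : FamOn lam F) (hkap : kap = Order.succ c2) (hkl : kap < lam) :
    ∃ b₀ ∈ smallSubsets lam kap, ∀ a ∈ Sset lam kap ψ, b₀ ⊆ a → a ∈ clubOf lam kap F := by
  classical
  let nf : ↥F → Norm lam := fun f =>
    ⟨⟨f.1.1, fun x => if h : ∀ i, x i < lam.ord then f.1.2 x else 0⟩,
      fun x hx => by
        show (if _ : ∀ i, x i < lam.ord then f.1.2 x else 0) < lam.ord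
        rw [dif_pos hx]
        exact hFam f.1 f.2 x hx,
      fun x hx => dif_neg hx⟩
  let d : ↥F → Seq lam := fun f => (hψ (nf f)).choose
  have hd : ∀ f : ↥F, ψ (d f) = nf f := fun f => (hψ (nf f)).choose_spec
  let b₀ : Set Ordinal.{0} := ⋃ f : ↥F, Set.range (fun n => ((d f n : Ordinal.{0})))
  have hb₀small : b₀ ∈ smallSubsets lam kap := by
    constructor
    · intro x hx
      obtain ⟨f, hf⟩ := Set.mem_iUnion.mp hx
      obtain ⟨n, rfl⟩ := hf
      exact (d f n).2
    · have hcc : Countable ↥F := hcnt.to_subtype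
      have hb₀cnt : b₀.Countable := Set.countable_iUnion fun f => Set.countable_range _
      have h1 : #↥b₀ ≤ ℵ₀ := Cardinal.mk_le_aleph0_iff.mpr hb₀cnt.to_subtype
      refine lt_of_le_of_lt h1 ?_
      rw [← Cardinal.lift_aleph0.{1,0}, Cardinal.lift_lt]
      exact lt_of_le_of_lt two_power_aleph0_le (hkap ▸ Order.lt_succ _)
  refine ⟨b₀, hb₀small, ?_⟩
  rintro a ⟨hsmall, hseg, hclosed⟩ hba
  refine ⟨hsmall, ?_, hseg⟩
  intro f hf x hx
  have hdmem : ∀ n, ((d ⟨f, hf⟩ n : Ordinal.{0})) ∈ a := fun n =>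
    hba (Set.mem_iUnion.mpr ⟨⟨f, hf⟩, Set.mem_range_self n⟩)
  have h1 := hclosed (d ⟨f, hf⟩) hdmem
  rw [hd ⟨f, hf⟩] at h1
  have h2 := h1 x hx
  have h3 : (if _ : ∀ i, x i < lam.ord then f.2 x else 0) ∈ a := h2
  rwa [dif_pos (fun i => hsmall.1 _ (hx i))] at h3

end StatAux

/-- If `λ = ℵ_ω`, `κ = (2^ℵ₀)⁺ < λ` and `2^λ = λ^ℵ₀`, then there is a
stationary subset of `[λ]^{<κ}` all of whose unbounded subsets are
stationary. -/
theorem exists_stationary_all_unbounded_subsets_stationary_alephOmega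
    (lam kap : Cardinal.{0})
    (hlam : lam = Cardinal.aleph Ordinal.omega0)
    (hkap : kap = Order.succ (2 ^ ℵ₀))
    (hkl : kap < lam)
    (harith : 2 ^ lam = lam ^ ℵ₀) :
    ∃ S ⊆ smallSubsets lam kap, IsStationaryPk lam kap S ∧
      ∀ T ⊆ S, IsUnbounded lam kap T → IsStationaryPk lam kap T := by

  have hlam0 : ℵ₀ ≤ lam := by
    rw [hlam]
    exact Cardinal.aleph0_le_aleph _
  obtain ⟨ψ, hψ⟩ := StatAux.exists_psi lam hlam0 harith
  have hkap' : kap = Order.succ StatAux.c2 := hkap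
  have key : ∀ b ∈ smallSubsets lam kap, ∃ a ∈ StatAux.Sset lam kap ψ, b ⊆ a := by
    intro b hb
    exact ⟨_, (StatAux.iter_mem_Sset hkap' hkl hb).1, (StatAux.iter_mem_Sset hkap' hkl hb).2⟩
  refine ⟨StatAux.Sset lam kap ψ, fun a ha => ha.1, ?_, ?_⟩
  · rintro C ⟨F, hcnt, hFam, rfl⟩
    obtain ⟨b₀, hb₀, hcatch⟩ := StatAux.catch_club hψ hcnt hFam hkap' hkl
    obtain ⟨a, haS, hba⟩ := key b₀ hb₀
    exact ⟨a, haS, hcatch a haS hba⟩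
  · rintro T hTS hTunb C ⟨F, hcnt, hFam, rfl⟩
    obtain ⟨b₀, hb₀, hcatch⟩ := StatAux.catch_club hψ hcnt hFam hkap' hkl
    obtain ⟨a, haT, hba⟩ := hTunb b₀ hb₀
    exact ⟨a, haT, hcatch a (hTS haT) hba⟩
end
end

section
/- Let κ be a regular uncountable cardinal and λ ≥ κ with λ^{<κ} = λ. Then every stationary subset S of [λ]^{<κ} contains an unbounded subset which is not stationary. -/
open Cardinal Set

noncomputable section

/-- Stationary sets meet every "contains b" requirement: key lemma. -/
lemma stationary_superset (lam kap : Cardinal.{0}) (hunc : ℵ₀ < kap)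
    (hkl : kap ≤ lam) (S : Set (Set Ordinal.{0})) (hS : IsStationaryPk lam kap S)
    (b : Set Ordinal.{0}) (hb : b ∈ smallSubsets lam kap) :
    ∃ a ∈ S, a ∈ smallSubsets lam kap ∧ b ⊆ a := by
  obtain ⟨hb1, hb2⟩ := hb
  obtain ⟨c, hck, hc⟩ := Cardinal.lt_lift_iff.1 hb2
  have hlam0 : (0 : Ordinal) < lam.ord := by
    rw [Cardinal.lt_ord, Ordinal.card_zero]
    exact lt_of_lt_of_le (lt_of_lt_of_le aleph0_pos hunc.le) hkl
  have hmk : Cardinal.mk ↥(Set.Iio c.ord) = Cardinal.mk ↥b := by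
    rw [Ordinal.mk_Iio_ordinal, Cardinal.card_ord, hc]
  obtain ⟨e⟩ := Cardinal.eq.1 hmk
  classical
  set g : Ordinal.{0} → Ordinal.{0} :=
    fun x => if h : x < c.ord then (e ⟨x, h⟩ : Ordinal) else 0 with hg
  set F : Set FinFun :=
    {⟨0, fun _ => c.ord⟩, ⟨1, fun v => g (v 0)⟩} with hF
  have hcount : F.Countable := ((Set.finite_singleton _).insert _).countable
  have hfam : FamOn lam F := by
    rintro f hf x hx
    rcases hf with hf | hf
    · subst hf; exact Cardinal.lt_ord.2 (by rw [Cardinal.card_ord]; exact lt_of_lt_of_le hck hkl)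
    · rcases hf with rfl
      by_cases h : x 0 < c.ord
      · simpa [g, h] using hb1 _ (e ⟨x 0, h⟩).2
      · simpa [g, h] using hlam0
  obtain ⟨a, haS, hsmall, hcl, β, hβ, hseg⟩ := hS (clubOf lam kap F) ⟨F, hcount, hfam, rfl⟩
  refine ⟨a, haS, hsmall, ?_⟩
  have hco : c.ord ∈ a := by
    have := hcl ⟨0, fun _ => c.ord⟩ (Set.mem_insert _ _) Fin.elim0 (fun i => i.elim0)
    exact this
  have hcβ : c.ord < β := by
    have : c.ord ∈ a ∩ Set.Iio kap.ord :=
      ⟨hco, Cardinal.lt_ord.2 (by rw [Cardinal.card_ord]; exact hck)⟩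
    rw [hseg] at this; exact this
  intro y hy
  have hx : (e.symm ⟨y, hy⟩ : Ordinal) < c.ord := (e.symm ⟨y, hy⟩).2
  have hxa : (e.symm ⟨y, hy⟩ : Ordinal) ∈ a := by
    have hmem : (e.symm ⟨y, hy⟩ : Ordinal) ∈ Set.Iio β := lt_trans hx hcβ
    rw [← hseg] at hmem; exact hmem.1
  have := hcl ⟨1, fun v => g (v 0)⟩ (Set.mem_insert_of_mem _ rfl)
      (fun _ => (e.symm ⟨y, hy⟩ : Ordinal)) (fun _ => hxa)
  have h' : ((e ⟨(e.symm ⟨y, hy⟩ : Ordinal), hx⟩ : Ordinal)) ∈ a := by simpa [g, hx] using this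
  have key : ((e ⟨(e.symm ⟨y, hy⟩ : Ordinal), hx⟩ : Ordinal)) = y :=
    congrArg Subtype.val (e.apply_symm_apply ⟨y, hy⟩)
  exact key ▸ h'

/-- Cardinality bound on `[λ]^{<κ}`. -/
lemma mk_smallSubsets_le (lam kap : Cardinal.{0}) (hunc : ℵ₀ < kap)
    (hkl : kap ≤ lam) (hpow : lam ^< kap = lam) :
    Cardinal.mk ↥(smallSubsets lam kap) ≤ Cardinal.lift.{1} lam := by
  have hal : ℵ₀ ≤ Cardinal.lift.{1} lam :=
    Cardinal.aleph0_le_lift.2 (le_trans hunc.le hkl)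
  set A : ↥(Set.Iio kap.ord) → Set (Set Ordinal.{0}) := fun i =>
    {t | t ⊆ Set.Iio lam.ord ∧ Cardinal.mk ↥t ≤ Cardinal.lift.{1} ((i : Ordinal).card)}
    with hA
  have hsub : smallSubsets lam kap ⊆ ⋃ i, A i := by
    rintro t ⟨ht1, ht2⟩
    obtain ⟨c, hck, hc⟩ := Cardinal.lt_lift_iff.1 ht2
    refine Set.mem_iUnion.2 ⟨⟨c.ord, Cardinal.lt_ord.2 (by rwa [Cardinal.card_ord])⟩, ?_, ?_⟩
    · exact fun x hx => ht1 x hx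
    · simp only [Cardinal.card_ord]; rw [← hc]
  have hAi : ∀ i, Cardinal.mk ↥(A i) ≤ Cardinal.lift.{1} lam := by
    intro i
    have h1 : Cardinal.mk ↥(A i) ≤
        max (Cardinal.mk ↥(Set.Iio lam.ord)) ℵ₀ ^ Cardinal.lift.{1} ((i : Ordinal).card) :=
      Cardinal.mk_bounded_subset_le _ _
    rw [Ordinal.mk_Iio_ordinal, Cardinal.card_ord, max_eq_left hal] at h1
    refine h1.trans ?_
    rw [← Cardinal.lift_power]
    calc Cardinal.lift.{1} (lam ^ (i : Ordinal).card)
        ≤ Cardinal.lift.{1} (lam ^< kap) :=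
          Cardinal.lift_le.2 (Cardinal.le_powerlt lam (Cardinal.lt_ord.1 i.2))
      _ = Cardinal.lift.{1} lam := by rw [hpow]
  calc Cardinal.mk ↥(smallSubsets lam kap) ≤ Cardinal.mk ↥(⋃ i, A i) :=
        Cardinal.mk_le_mk_of_subset hsub
    _ ≤ Cardinal.mk ↥(Set.Iio kap.ord) * ⨆ i, Cardinal.mk ↥(A i) := Cardinal.mk_iUnion_le A
    _ ≤ Cardinal.lift.{1} lam * Cardinal.lift.{1} lam := by
        refine mul_le_mul' ?_ (ciSup_le' hAi)
        rw [Ordinal.mk_Iio_ordinal, Cardinal.card_ord]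
        exact Cardinal.lift_le.2 hkl
    _ = Cardinal.lift.{1} lam := Cardinal.mul_eq_self hal

/-- If `κ` is regular uncountable, `λ ≥ κ` and `λ^{<κ} = λ`, then every
stationary subset of `[λ]^{<κ}` contains an unbounded subset which is not
stationary. -/
theorem stationary_contains_unbounded_nonstationary_of_powerlt
    (lam kap : Cardinal.{0}) (hreg : kap.IsRegular) (hunc : ℵ₀ < kap)
    (hkl : kap ≤ lam) (hpow : lam ^< kap = lam) :
    ∀ S ⊆ smallSubsets lam kap, IsStationaryPk lam kap S →
      ∃ T ⊆ S, IsUnbounded lam kap T ∧ ¬ IsStationaryPk lam kap T := by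
  classical
  intro S hSsub hS
  have hmkIio : Cardinal.mk ↥(Set.Iio lam.ord) = Cardinal.lift.{1} lam := by
    rw [Ordinal.mk_Iio_ordinal, Cardinal.card_ord]
  -- injection from smallSubsets into Iio lam.ord
  obtain ⟨ι⟩ : Nonempty (↥(smallSubsets lam kap) ↪ ↥(Set.Iio lam.ord)) := by
    rw [← Cardinal.le_def, hmkIio]
    exact mk_smallSubsets_le lam kap hunc hkl hpow
  have hka : ℵ₀ ≤ Cardinal.lift.{1} kap :=
    Cardinal.aleph0_le_lift.2 hunc.le
  -- for each b, a member of S containing b and ι b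
  have hstep : ∀ b : ↥(smallSubsets lam kap),
      ∃ a, a ∈ S ∧ a ∈ smallSubsets lam kap ∧ insert (ι b : Ordinal) (b : Set Ordinal) ⊆ a := by
    intro b
    have hb' : insert (ι b : Ordinal) (b : Set Ordinal) ∈ smallSubsets lam kap := by
      constructor
      · rintro x (rfl | hx)
        · exact (ι b).2
        · exact b.2.1 x hx
      · refine lt_of_le_of_lt Cardinal.mk_insert_le ?_
        exact Cardinal.add_lt_of_lt hka b.2.2
          (lt_of_lt_of_le one_lt_aleph0 hka)
    obtain ⟨a, h1, h2, h3⟩ := stationary_superset lam kap hunc hkl S hS _ hb'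
    exact ⟨a, h1, h2, h3⟩
  choose A hAS hAsmall hAsub using hstep
  -- a missing ordinal for each A b
  have hmiss : ∀ b : ↥(smallSubsets lam kap), ∃ x, x < lam.ord ∧ x ∉ A b := by
    intro b
    by_contra h
    push_neg at h
    have : Set.Iio lam.ord ⊆ A b := fun x hx => h x hx
    have := Cardinal.mk_le_mk_of_subset this
    rw [hmkIio] at this
    exact absurd (lt_of_le_of_lt this (hAsmall b).2)
      (not_lt.2 (Cardinal.lift_le.2 hkl))
  choose x hxlt hxnot using hmiss
  set f : Ordinal.{0} → Ordinal.{0} := fun y =>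
    if h : ∃ b : ↥(smallSubsets lam kap), (ι b : Ordinal) = y then x h.choose else 0
    with hf
  have hlam0 : (0 : Ordinal) < lam.ord := by
    rw [Cardinal.lt_ord, Ordinal.card_zero]
    exact lt_of_lt_of_le (lt_of_lt_of_le aleph0_pos hunc.le) hkl
  set F : Set FinFun := {⟨1, fun v => f (v 0)⟩} with hF
  refine ⟨Set.range (fun b => A b), ?_, ?_, ?_⟩
  · rintro a ⟨b, rfl⟩; exact hAS b
  · intro b hb
    exact ⟨A ⟨b, hb⟩, ⟨⟨b, hb⟩, rfl⟩, fun y hy => hAsub ⟨b, hb⟩ (Set.mem_insert_of_mem _ hy)⟩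
  · intro hT
    have hclub : IsClubPk lam kap (clubOf lam kap F) := by
      refine ⟨F, Set.countable_singleton _, ?_, rfl⟩
      rintro g rfl v hv
      show f (v 0) < lam.ord
      by_cases h : ∃ b : ↥(smallSubsets lam kap), (ι b : Ordinal) = v 0
      · have : f (v 0) = x h.choose := dif_pos h
        rw [this]; exact hxlt h.choose
      · have : f (v 0) = 0 := dif_neg h
        rw [this]; exact hlam0
    obtain ⟨a, ⟨b, rfl⟩, hsm, hcl, -⟩ := hT _ hclub
    have hmem : (ι b : Ordinal) ∈ A b := hAsub b (Set.mem_insert _ _)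
    have := hcl ⟨1, fun v => f (v 0)⟩ rfl (fun _ => (ι b : Ordinal)) (fun _ => hmem)
    have hex : ∃ b' : ↥(smallSubsets lam kap), (ι b' : Ordinal) = (ι b : Ordinal) := ⟨b, rfl⟩
    have h2 : f (ι b : Ordinal) ∈ A b := this
    have h3 : f (ι b : Ordinal) = x hex.choose := dif_pos hex
    have hbb : hex.choose = b := ι.injective (Subtype.ext hex.choose_spec)
    rw [h3, hbb] at h2
    exact hxnot b h2
end
end

section
/- Suppose κ is a regular uncountable cardinal, λ ≥ κ, cf(λ) < κ, and ⟨(α_β, C_β) : β < λ⟩ is a sequence such that: (a) for each β < λ, α_β is an ordinal with κ ≤ α_β ≤ κ + β < λ; (b) C_β is a club of [α_β]^{<κ}; (c) for every ordinal α with κ ≤ α < λ and every club C of [α]^{<κ}, there exists β < λ with α_β = α and C_β ⊆ C. Then the set C* = { a ∈ [λ]^{<κ} : for every β ∈ a, a ∩ α_β ∈ C_β } is a club of [λ]^{<κ} and every unbounded subset of C* is stationary. -/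
open Cardinal Set

noncomputable section

/-- `[A]^{<κ}` for an ordinal `A`: the collection of subsets of the set of
ordinals `< A` of cardinality `< κ`. -/
def smallSubsetsO (A : Ordinal.{0}) (kap : Cardinal.{0}) : Set (Set Ordinal.{0}) :=
  {a | (∀ x ∈ a, x < A) ∧ Cardinal.mk ↥a < Cardinal.lift.{1} kap}

/-- The family `F` consists of finitary functions *on `A`*. -/
def FamOnO (A : Ordinal.{0}) (F : Set FinFun) : Prop :=
  ∀ f ∈ F, ∀ x : Fin f.1 → Ordinal.{0}, (∀ i, x i < A) → f.2 x < A

/-- The club `C_F` of `[A]^{<κ}` associated to a family `F` of finitary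
functions on `A`: the members `a` of `[A]^{<κ}` closed under every function
of `F` and such that `a ∩ κ` is an ordinal (an initial segment of `κ`). -/
def clubOfO (A : Ordinal.{0}) (kap : Cardinal.{0}) (F : Set FinFun) :
    Set (Set Ordinal.{0}) :=
  {a | a ∈ smallSubsetsO A kap ∧
    (∀ f ∈ F, ∀ x : Fin f.1 → Ordinal.{0}, (∀ i, x i ∈ a) → f.2 x ∈ a) ∧
    ∃ β < kap.ord, a ∩ Set.Iio kap.ord = Set.Iio β}

/-- `C` is a club of `[A]^{<κ}`. -/
def IsClubO (A : Ordinal.{0}) (kap : Cardinal.{0}) (C : Set (Set Ordinal.{0})) : Prop :=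
  ∃ F : Set FinFun, F.Countable ∧ FamOnO A F ∧ C = clubOfO A kap F

/-- `S` is a stationary subset of `[A]^{<κ}`: it meets every club. -/
def IsStationaryO (A : Ordinal.{0}) (kap : Cardinal.{0}) (S : Set (Set Ordinal.{0})) : Prop :=
  ∀ C, IsClubO A kap C → (S ∩ C).Nonempty

/-- `S` is an unbounded subset of `[A]^{<κ}`: every member of `[A]^{<κ}`
is contained in some member of `S`. -/
def IsUnboundedO (A : Ordinal.{0}) (kap : Cardinal.{0}) (S : Set (Set Ordinal.{0})) : Prop :=
  ∀ b ∈ smallSubsetsO A kap, ∃ a ∈ S, b ⊆ a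

/-! ### Auxiliary material -/

/-- The identity as a finitary function. -/
@[reducible] def idFF : FinFun := ⟨1, fun x => x 0⟩

lemma clubOfO_insert_idFF (A : Ordinal.{0}) (k : Cardinal.{0}) (F : Set FinFun) :
    clubOfO A k (insert idFF F) = clubOfO A k F := by
  ext a
  constructor
  · rintro ⟨h1, h2, h3⟩
    exact ⟨h1, fun f hf => h2 f (Set.mem_insert_of_mem _ hf), h3⟩
  · rintro ⟨h1, h2, h3⟩
    refine ⟨h1, ?_, h3⟩
    intro f hf
    rcases Set.mem_insert_iff.1 hf with rfl | hf
    · exact fun x hx => hx 0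
    · exact h2 f hf

open scoped Classical in
/-- The uniform family of functions coding all the `C_β`'s. -/
@[reducible] def gfun (lam : Cardinal.{0}) (alph : Ordinal.{0} → Ordinal.{0})
    (en : Ordinal.{0} → ℕ → FinFun) (n m : ℕ) : FinFun :=
  ⟨m + 1, fun x =>
    if h : x 0 < lam.ord ∧ (en (x 0) n).1 = m ∧ ∀ i : Fin m, x i.succ < alph (x 0) then
      (en (x 0) n).2 fun i => x (Fin.succ (Fin.cast h.2.1 i))
    else x 0⟩

open scoped Classical in
lemma gfun_apply (lam : Cardinal.{0}) (alph : Ordinal.{0} → Ordinal.{0})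
    (en : Ordinal.{0} → ℕ → FinFun) (n m : ℕ) (x : Fin (m + 1) → Ordinal.{0}) :
    (gfun lam alph en n m).2 x =
      if h : x 0 < lam.ord ∧ (en (x 0) n).1 = m ∧ ∀ i : Fin m, x i.succ < alph (x 0) then
        (en (x 0) n).2 fun i => x (Fin.succ (Fin.cast h.2.1 i))
      else x 0 := rfl

open scoped Classical in
/-- The restriction of a finitary function to an ordinal `s`. -/
@[reducible] def resF (s : Ordinal.{0}) (f : FinFun) : FinFun :=
  ⟨f.1, fun x => if (∀ i, x i < s) ∧ f.2 x < s then f.2 x else 0⟩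

open scoped Classical in
lemma resF_apply (s : Ordinal.{0}) (f : FinFun) (x : Fin f.1 → Ordinal.{0}) :
    (resF s f).2 x = if (∀ i, x i < s) ∧ f.2 x < s then f.2 x else 0 := rfl

/-- Suppose `κ` is regular uncountable, `λ ≥ κ`, `cf(λ) < κ`, and
`⟨(α_β, C_β) : β < λ⟩` satisfies (a) `κ ≤ α_β ≤ κ + β < λ`, (b) `C_β` is a
club of `[α_β]^{<κ}`, and (c) every club of `[α]^{<κ}` (for `κ ≤ α < λ`)
contains some `C_β` with `α_β = α`.  Then
`C* = { a ∈ [λ]^{<κ} : ∀ β ∈ a, a ∩ α_β ∈ C_β }` is a club of `[λ]^{<κ}`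
and every unbounded subset of `C*` is stationary. -/
theorem cstar_club_and_all_unbounded_subsets_stationary
    (lam kap : Cardinal.{0}) (hreg : kap.IsRegular) (hunc : ℵ₀ < kap)
    (hkl : kap ≤ lam) (hcof : lam.ord.cof < kap)
    (alph : Ordinal.{0} → Ordinal.{0}) (Cb : Ordinal.{0} → Set (Set Ordinal.{0}))
    (ha : ∀ β < lam.ord,
      kap.ord ≤ alph β ∧ alph β ≤ kap.ord + β ∧ kap.ord + β < lam.ord)
    (hb : ∀ β < lam.ord, IsClubO (alph β) kap (Cb β))
    (hc : ∀ α : Ordinal.{0}, kap.ord ≤ α → α < lam.ord →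
      ∀ C, IsClubO α kap C → ∃ β < lam.ord, alph β = α ∧ Cb β ⊆ C) :
    IsClubO lam.ord kap
      {a | a ∈ smallSubsetsO lam.ord kap ∧
        ∀ β ∈ a, a ∩ Set.Iio (alph β) ∈ Cb β} ∧
    ∀ U ⊆ {a | a ∈ smallSubsetsO lam.ord kap ∧
        ∀ β ∈ a, a ∩ Set.Iio (alph β) ∈ Cb β},
      IsUnboundedO lam.ord kap U → IsStationaryO lam.ord kap U := by
  classical
  set S : Set (Set Ordinal.{0}) :=
    {a | a ∈ smallSubsetsO lam.ord kap ∧ ∀ β ∈ a, a ∩ Set.Iio (alph β) ∈ Cb β} with hSdef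
  -- basic facts
  have hkl' : kap < lam := by
    rcases lt_or_eq_of_le hkl with h | h
    · exact h
    · exfalso; rw [← h, hreg.cof_eq] at hcof; exact lt_irrefl _ hcof
  have hko : kap.ord < lam.ord := Cardinal.ord_lt_ord.2 hkl'
  have hk0 : (0 : Ordinal) < kap.ord := by
    have h0 : (0 : Cardinal) < kap := lt_trans aleph0_pos hunc
    have := Cardinal.ord_lt_ord.2 h0
    simpa using this
  have hl0 : (0 : Ordinal) < lam.ord := lt_trans hk0 hko
  have hlamlim : Order.IsSuccLimit lam.ord := Cardinal.isSuccLimit_ord (le_trans (le_of_lt hunc) hkl)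
  -- choose the coding families for the `Cb β`
  have hbex : ∀ β : Ordinal.{0}, ∃ F : Set FinFun, F.Countable ∧ F.Nonempty ∧
      FamOnO (alph β) F ∧ (β < lam.ord → Cb β = clubOfO (alph β) kap F) := by
    intro β
    by_cases h : β < lam.ord
    · obtain ⟨F, h1, h2, h3⟩ := hb β h
      refine ⟨insert idFF F, h1.insert _, ⟨idFF, Set.mem_insert _ _⟩, ?_, fun _ => by
        rw [h3, clubOfO_insert_idFF]⟩
      intro f hf
      rcases Set.mem_insert_iff.1 hf with rfl | hf
      · exact fun x hx => hx 0
      · exact h2 f hf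
    · exact ⟨{idFF}, Set.countable_singleton _, ⟨idFF, rfl⟩,
        fun f hf => by rcases hf with rfl; exact fun x hx => hx 0,
        fun h' => absurd h' h⟩
  choose Fc hFcct hFcne hFcfam hFceq using hbex
  choose en hen using fun β => (hFcct β).exists_eq_range (hFcne β)
  -- the uniform countable family
  set G : Set FinFun := ⋃ n : ℕ, ⋃ m : ℕ, {gfun lam alph en n m} with hGdef
  have hGmem : ∀ n m : ℕ, gfun lam alph en n m ∈ G := fun n m =>
    Set.mem_iUnion.2 ⟨n, Set.mem_iUnion.2 ⟨m, rfl⟩⟩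
  have hGct : G.Countable :=
    Set.countable_iUnion fun n => Set.countable_iUnion fun m => Set.countable_singleton _
  have hGfam : FamOnO lam.ord G := by
    intro f hf x hx
    simp only [hGdef, Set.mem_iUnion, Set.mem_singleton_iff] at hf
    obtain ⟨n, m, rfl⟩ := hf
    rw [gfun_apply]
    split_ifs with h
    · have h1 := hFcfam (x 0) (en (x 0) n) (by rw [hen]; exact Set.mem_range_self n)
        (fun i => x (Fin.succ (Fin.cast h.2.1 i))) (fun i => h.2.2 (Fin.cast h.2.1 i))
      have h2 := ha (x 0) h.1
      exact lt_trans (lt_of_lt_of_le h1 h2.2.1) h2.2.2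
    · exact hx 0
  -- intersection identity
  have hinter : ∀ (a : Set Ordinal.{0}) (α : Ordinal.{0}), kap.ord ≤ α →
      a ∩ Set.Iio α ∩ Set.Iio kap.ord = a ∩ Set.Iio kap.ord := by
    intro a α hα
    ext x
    simp only [Set.mem_inter_iff, Set.mem_Iio]
    constructor
    · rintro ⟨⟨h1, _⟩, h2⟩; exact ⟨h1, h2⟩
    · rintro ⟨h1, h2⟩; exact ⟨⟨h1, lt_of_lt_of_le h2 hα⟩, h2⟩
  -- a nonempty member of S has initial-segment intersection with κ
  have hinit : ∀ a ∈ S, a.Nonempty → ∃ β' < kap.ord, a ∩ Set.Iio kap.ord = Set.Iio β' := by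
    rintro a ⟨hsm, hcl⟩ ⟨γ, hγ⟩
    have hγl : γ < lam.ord := hsm.1 γ hγ
    have h1 := hcl γ hγ
    rw [hFceq γ hγl] at h1
    obtain ⟨-, -, β', hβ', heq⟩ := h1
    refine ⟨β', hβ', ?_⟩
    rw [← hinter a (alph γ) (ha γ hγl).1]
    exact heq
  -- members of S are closed under G
  have hclos : ∀ a ∈ S, ∀ g ∈ G, ∀ x : Fin g.1 → Ordinal.{0},
      (∀ i, x i ∈ a) → g.2 x ∈ a := by
    rintro a ⟨hsm, hcl⟩ g hg x hx
    simp only [hGdef, Set.mem_iUnion, Set.mem_singleton_iff] at hg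
    obtain ⟨n, m, rfl⟩ := hg
    rw [gfun_apply]
    split_ifs with h
    · have h1 := hcl (x 0) (hx 0)
      rw [hFceq _ h.1] at h1
      obtain ⟨-, hclo, -⟩ := h1
      have := hclo (en (x 0) n) (by rw [hen]; exact Set.mem_range_self n)
        (fun i => x (Fin.succ (Fin.cast h.2.1 i)))
        (fun i => ⟨hx _, h.2.2 (Fin.cast h.2.1 i)⟩)
      exact this.1
    · exact hx 0
  -- clubOfO G ⊆ S
  have hfwd : ∀ a ∈ clubOfO lam.ord kap G, a ∈ S := by
    rintro a ⟨hsm, hcl, β₀, hβ₀, hseg⟩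
    refine ⟨hsm, ?_⟩
    intro β hβ
    have hβl : β < lam.ord := hsm.1 β hβ
    rw [hFceq β hβl]
    refine ⟨⟨fun x hx => hx.2,
      lt_of_le_of_lt (Cardinal.mk_le_mk_of_subset Set.inter_subset_left) hsm.2⟩, ?_,
      β₀, hβ₀, by rw [hinter a (alph β) (ha β hβl).1]; exact hseg⟩
    intro f hf x hx
    rw [hen β] at hf
    obtain ⟨n, rfl⟩ := hf
    have hval : (en β n).2 x < alph β :=
      hFcfam β (en β n) (by rw [hen]; exact Set.mem_range_self n) x (fun i => (hx i).2)
    refine ⟨?_, hval⟩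
    -- use closure under `gfun n (en β n).1`
    set y : Fin ((en β n).1 + 1) → Ordinal.{0} := Fin.cases β x with hy
    have hy0 : y 0 = β := rfl
    have hys : ∀ i : Fin ((en β n).1), y i.succ = x i := fun i => by simp [hy]
    have hguard : y 0 < lam.ord ∧ (en (y 0) n).1 = (en β n).1 ∧
        ∀ i : Fin ((en β n).1), y i.succ < alph (y 0) := by
      refine ⟨hβl, rfl, fun i => ?_⟩
      rw [hys i, hy0]
      exact (hx i).2
    have hg := hcl (gfun lam alph en n ((en β n).1)) (hGmem _ _) y (by
      intro j
      induction j using Fin.cases with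
      | zero => exact hβ
      | succ i => rw [hys i]; exact (hx i).1)
    rw [gfun_apply, dif_pos hguard] at hg
    have harg : (fun i => y (Fin.succ (Fin.cast hguard.2.1 i))) = x := by
      funext i
      have hcast : Fin.cast hguard.2.1 i = i := by
        apply Fin.ext
        simp
      rw [hcast]
      exact hys i
    rw [harg] at hg
    exact hg
  refine ⟨⟨G, hGct, hGfam, ?_⟩, ?_⟩
  · -- S = clubOfO lam.ord kap G
    ext a
    constructor
    · intro hmem
      refine ⟨hmem.1, hclos a hmem, ?_⟩
      rcases Set.eq_empty_or_nonempty a with rfl | hne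
      · refine ⟨0, hk0, ?_⟩
        rw [Set.empty_inter]
        ext x
        simp
      · exact hinit a hmem hne
    · exact hfwd a
  · -- stationarity of unbounded subsets of S
    intro U hUS hUnb C hCclub
    obtain ⟨F, hFct, hFfam, rfl⟩ := hCclub
    have hD : ∀ s : Ordinal.{0}, kap.ord ≤ s → s < lam.ord →
        IsClubO s kap (clubOfO s kap (resF s '' F)) := by
      intro s h1 h2
      refine ⟨resF s '' F, hFct.image _, ?_, rfl⟩
      rintro f ⟨f₀, hf₀, rfl⟩ x hx
      rw [resF_apply]
      split_ifs with h
      · exact h.2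
      · exact lt_of_lt_of_le hk0 h1
    have hβex : ∀ s : Ordinal.{0}, ∃ β : Ordinal.{0},
        kap.ord ≤ s → s < lam.ord →
          β < lam.ord ∧ alph β = s ∧ Cb β ⊆ clubOfO s kap (resF s '' F) := by
      intro s
      by_cases h1 : kap.ord ≤ s
      · by_cases h2 : s < lam.ord
        · obtain ⟨β, hβ1, hβ2, hβ3⟩ := hc s h1 h2 _ (hD s h1 h2)
          exact ⟨β, fun _ _ => ⟨hβ1, hβ2, hβ3⟩⟩
        · exact ⟨0, fun _ h => absurd h h2⟩
      · exact ⟨0, fun h _ => absurd h h1⟩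
    choose βs hβs using hβex
    obtain ⟨ι, fio, hlsub, hmkι⟩ := Ordinal.exists_lsub_cof lam.ord
    have hιne : Nonempty ι := by
      obtain ⟨i, -⟩ := Ordinal.lt_lsub_iff.1 (by rw [hlsub]; exact hl0)
      exact ⟨i⟩
    set sfun : ι → Ordinal.{0} := fun i => kap.ord ⊔ fio i with hsfun
    have hsk : ∀ i, kap.ord ≤ sfun i := fun i => le_sup_left
    have hsl : ∀ i, sfun i < lam.ord := fun i =>
      sup_lt_iff.2 ⟨hko, by rw [← hlsub]; exact Ordinal.lt_lsub fio i⟩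
    set b : Set Ordinal.{0} := Set.range (fun i => βs (sfun i)) with hbdef
    have hbsm : b ∈ smallSubsetsO lam.ord kap := by
      constructor
      · rintro x ⟨i, rfl⟩
        exact (hβs _ (hsk i) (hsl i)).1
      · have hr : Cardinal.mk ↥b ≤ Cardinal.lift.{1} (Cardinal.mk ι) := by
          simpa using Cardinal.mk_range_le_lift (f := fun i => βs (sfun i))
        exact lt_of_le_of_lt hr (Cardinal.lift_lt.2 (by rw [hmkι]; exact hcof))
    obtain ⟨a, haU, hba⟩ := hUnb b hbsm
    have haS : a ∈ S := hUS haU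
    obtain ⟨hasm, hacl⟩ := haS
    refine ⟨a, haU, hasm, ?_, ?_⟩
    · -- a is closed under F
      intro f hf x hx
      have hxl : ∀ i, x i < lam.ord := fun i => hasm.1 _ (hx i)
      have hfxl : f.2 x < lam.ord := hFfam f hf x hxl
      set γ : Ordinal.{0} := (Finset.univ.sup x) ⊔ f.2 x with hγdef
      have hγl : γ < lam.ord := by
        apply sup_lt_iff.2
        refine ⟨?_, hfxl⟩
        apply Finset.sup_lt_iff (by exact hl0) |>.2
        intro i _
        exact hxl i
      obtain ⟨i, hi⟩ := Ordinal.lt_lsub_iff.1 (by rw [hlsub]; exact hlamlim.succ_lt hγl)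
      have hγs : γ < sfun i := lt_of_lt_of_le (Order.succ_le_iff.1 hi) le_sup_right
      have hxb : ∀ j, x j ≤ γ := fun j =>
        le_trans (Finset.le_sup (Finset.mem_univ j)) le_sup_left
      have hmemβ := hβs (sfun i) (hsk i) (hsl i)
      have hβa : βs (sfun i) ∈ a := hba ⟨i, rfl⟩
      have h1 := hacl _ hβa
      rw [hmemβ.2.1] at h1
      have h2 := hmemβ.2.2 h1
      obtain ⟨-, hclo, -⟩ := h2
      have h3 := hclo (resF (sfun i) f) ⟨f, hf, rfl⟩ x
        (fun j => ⟨hx j, lt_of_le_of_lt (hxb j) hγs⟩)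
      have hval : (resF (sfun i) f).2 x = f.2 x := by
        rw [resF_apply, if_pos]
        exact ⟨fun j => lt_of_le_of_lt (hxb j) hγs,
          lt_of_le_of_lt le_sup_right hγs⟩
      rw [hval] at h3
      exact h3.1
    · -- initial segment
      obtain ⟨i⟩ := hιne
      exact hinit a ⟨hasm, hacl⟩ ⟨βs (sfun i), hba ⟨i, rfl⟩⟩
end
end
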